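/- With d = deg π, the polynomial φ̄_d is square-free in 𝔽_𝔭[U,V]. -/

import Mathlib

open MvPolynomial

/-- The isobaric polynomials `φ_d ∈ A[U,V]` (with `A = 𝔽_q[T]`), defined by the recursion
`φ_0 = 1`, `φ_1 = U − T^q·V`, and
`φ_d = φ_{d−1}·(U − T^q·V)^{q^{d−1}} + (T^{q^{d−1}} − T)·φ_{d−2}·(U^q·V)^{q^{d−2}}` for `d ≥ 2`.
Here `U = X 0`, `V = X 1` and `T = Polynomial.X`. -/
noncomputable def phiPoly (Fq : Type) [Field Fq] (q : ℕ) :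
    ℕ → MvPolynomial (Fin 2) (Polynomial Fq)
  | 0 => 1
  | 1 => X 0 - C (Polynomial.X ^ q) * X 1
  | (d + 2) =>
      phiPoly Fq q (d + 1) * (X 0 - C (Polynomial.X ^ q) * X 1) ^ q ^ (d + 1) +
        C (Polynomial.X ^ (q ^ (d + 1)) - Polynomial.X) * phiPoly Fq q d *
          (X 0 ^ q * X 1) ^ q ^ d

private theorem two_step_induction {P : ℕ → Prop} (h0 : P 0) (h1 : P 1)
    (hstep : ∀ d, P d → P (d + 1) → P (d + 2)) : ∀ d, P d := by
  have h : ∀ d, P d ∧ P (d + 1) := by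
    intro d
    induction d with
    | zero => exact ⟨h0, h1⟩
    | succ n ih => exact ⟨ih.2, hstep n ih.1 ih.2⟩
  exact fun d => (h d).1

theorem primeX0 (K : Type) [CommRing K] [IsDomain K] : Prime (X 0 : MvPolynomial (Fin 2) K) := by
  rw [← MulEquiv.prime_iff (MvPolynomial.finSuccEquiv K 1).toRingEquiv.toMulEquiv]
  have h : (MvPolynomial.finSuccEquiv K 1) (X 0) = Polynomial.X := MvPolynomial.finSuccEquiv_X_zero
  rw [show ((MvPolynomial.finSuccEquiv K 1).toRingEquiv.toMulEquiv (X 0)) = Polynomial.X from h]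
  exact Polynomial.prime_X

theorem primeX1 (K : Type) [CommRing K] [IsDomain K] : Prime (X 1 : MvPolynomial (Fin 2) K) := by
  rw [← MulEquiv.prime_iff (MvPolynomial.renameEquiv K (Equiv.swap (0 : Fin 2) 1)).toRingEquiv.toMulEquiv]
  have h : (MvPolynomial.renameEquiv K (Equiv.swap (0 : Fin 2) 1)) (X 1)
      = (X 0 : MvPolynomial (Fin 2) K) := by
    simp [MvPolynomial.renameEquiv_apply, MvPolynomial.rename_X]
  rw [show ((MvPolynomial.renameEquiv K (Equiv.swap (0 : Fin 2) 1)).toRingEquiv.toMulEquiv (X 1) :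
      MvPolynomial (Fin 2) K) = X 0 from h]
  exact primeX0 K

section Derivs

variable (Fq : Type) [Field Fq] (q p : ℕ)

theorem pderiv_pow_eq_zero_of_dvd {f : MvPolynomial (Fin 2) (Polynomial Fq)} {n : ℕ}
    [CharP (Polynomial Fq) p] (hn : p ∣ n) (i : Fin 2) : pderiv i (f ^ n) = 0 := by
  haveI : CharP (MvPolynomial (Fin 2) (Polynomial Fq)) p :=
    charP_of_injective_ringHom (MvPolynomial.C_injective (Fin 2) (Polynomial Fq)) p
  rw [pderiv_pow, show ((n : MvPolynomial (Fin 2) (Polynomial Fq))) = 0 from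
    (CharP.cast_eq_zero_iff _ p n).mpr hn, zero_mul, zero_mul]

theorem pderiv0_phiPoly [CharP (Polynomial Fq) p] (hpq : p ∣ q) (d : ℕ) :
    pderiv 0 (phiPoly Fq q (d + 2)) =
      pderiv 0 (phiPoly Fq q (d + 1)) * (X 0 - C (Polynomial.X ^ q) * X 1) ^ q ^ (d + 1) +
        C (Polynomial.X ^ (q ^ (d + 1)) - Polynomial.X) * pderiv 0 (phiPoly Fq q d) *
          (X 0 ^ q * X 1) ^ q ^ d := by
  have hB : pderiv (0 : Fin 2) ((X 0 - C (Polynomial.X ^ q) * X 1 :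
      MvPolynomial (Fin 2) (Polynomial Fq)) ^ q ^ (d + 1)) = 0 :=
    pderiv_pow_eq_zero_of_dvd Fq p (dvd_pow hpq (Nat.succ_ne_zero d)) 0
  have hM : pderiv (0 : Fin 2) ((X 0 ^ q * X 1 : MvPolynomial (Fin 2) (Polynomial Fq)) ^ q ^ d)
      = 0 := by
    rw [mul_pow, ← pow_mul]
    rw [pderiv_mul, pderiv_pow_eq_zero_of_dvd Fq p (Dvd.dvd.mul_right hpq _) 0, zero_mul,
      pderiv_pow, pderiv_X_of_ne (by decide : (1 : Fin 2) ≠ 0), mul_zero, mul_zero, add_zero]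
  rw [phiPoly]
  rw [map_add, pderiv_mul, hB, mul_zero, add_zero, pderiv_mul, hM, mul_zero, add_zero,
    pderiv_C_mul, mul_assoc]

theorem casoratian_zero :
    phiPoly Fq q 1 * pderiv 0 (phiPoly Fq q 0) - phiPoly Fq q 0 * pderiv 0 (phiPoly Fq q 1)
      = -1 := by
  rw [show phiPoly Fq q 0 = 1 from rfl, show phiPoly Fq q 1 = X 0 - C (Polynomial.X ^ q) * X 1
    from rfl]
  rw [map_sub, pderiv_C_mul]
  simp [pderiv_X_of_ne (by decide : (1 : Fin 2) ≠ 0)]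

theorem casoratian_step [CharP (Polynomial Fq) p] (hpq : p ∣ q) (d : ℕ) :
    phiPoly Fq q (d + 2) * pderiv 0 (phiPoly Fq q (d + 1)) -
        phiPoly Fq q (d + 1) * pderiv 0 (phiPoly Fq q (d + 2)) =
      -(C (Polynomial.X ^ (q ^ (d + 1)) - Polynomial.X) * (X 0 ^ q * X 1) ^ q ^ d) *
        (phiPoly Fq q (d + 1) * pderiv 0 (phiPoly Fq q d) -
          phiPoly Fq q d * pderiv 0 (phiPoly Fq q (d + 1))) := by
  rw [pderiv0_phiPoly Fq q p hpq d]
  conv_lhs => rw [phiPoly]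
  ring

end Derivs

section Generic

variable {Fq : Type} [Field Fq] {q : ℕ} {S : Type} [CommRing S] [IsDomain S]
variable (f : Polynomial Fq →+* S)

set_option linter.unusedSectionVars false

theorem map_phiPoly_rec (d : ℕ) :
    MvPolynomial.map f (phiPoly Fq q (d + 2)) =
      MvPolynomial.map f (phiPoly Fq q (d + 1)) *
        (X 0 - C (f (Polynomial.X ^ q)) * X 1) ^ q ^ (d + 1) +
      C (f (Polynomial.X ^ q ^ (d + 1) - Polynomial.X)) *
        MvPolynomial.map f (phiPoly Fq q d) * (X 0 ^ q * X 1) ^ q ^ d := by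
  rw [phiPoly]
  simp only [map_add, map_mul, map_pow, map_sub, MvPolynomial.map_C, MvPolynomial.map_X]

theorem eval_map_phiPoly_10 (hq0 : q ≠ 0) (d : ℕ) :
    eval ![(1 : S), 0] (MvPolynomial.map f (phiPoly Fq q d)) = 1 := by
  induction d using two_step_induction with
  | h0 => rw [show phiPoly Fq q 0 = 1 from rfl]; simp
  | h1 =>
    rw [show phiPoly Fq q 1 = X 0 - C (Polynomial.X ^ q) * X 1 from rfl]
    simp
  | hstep d h1 h2 =>
    rw [map_phiPoly_rec f d]
    simp only [eval_add, eval_mul, eval_pow, eval_sub, eval_C, eval_X, Matrix.cons_val_zero,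
      Matrix.cons_val_one, Matrix.head_cons, h1, h2]
    simp [zero_pow (pow_ne_zero d hq0)]

theorem eval_map_phiPoly_01 (hq0 : q ≠ 0) (hX : f Polynomial.X ≠ 0) (d : ℕ) :
    eval ![(0 : S), 1] (MvPolynomial.map f (phiPoly Fq q d)) ≠ 0 := by
  induction d using two_step_induction with
  | h0 => rw [show phiPoly Fq q 0 = 1 from rfl]; simp
  | h1 =>
    rw [show phiPoly Fq q 1 = X 0 - C (Polynomial.X ^ q) * X 1 from rfl]
    simp only [map_sub, map_mul, MvPolynomial.map_C, MvPolynomial.map_X, eval_sub, eval_mul,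
      eval_C, eval_X, Matrix.cons_val_zero, Matrix.cons_val_one, Matrix.head_cons, map_pow]
    rw [zero_sub, mul_one]
    exact neg_ne_zero.mpr (pow_ne_zero q hX)
  | hstep d h1 h2 =>
    rw [map_phiPoly_rec f d]
    simp only [eval_add, eval_mul, eval_pow, eval_sub, eval_C, eval_X, Matrix.cons_val_zero,
      Matrix.cons_val_one, Matrix.head_cons]
    rw [zero_pow hq0, zero_mul, zero_pow (pow_ne_zero d hq0), mul_zero, add_zero,
      zero_sub, mul_one]
    refine mul_ne_zero h2 (pow_ne_zero _ (neg_ne_zero.mpr ?_))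
    rw [map_pow]
    exact pow_ne_zero q hX

theorem map_casoratian (p : ℕ) [CharP (Polynomial Fq) p] (hpq : p ∣ q) (N : ℕ)
    (hfrob : ∀ j, 0 < j → j < N → f (Polynomial.X ^ q ^ j - Polynomial.X) ≠ 0) :
    ∀ e, e < N → ∃ c : S, c ≠ 0 ∧ ∃ m : ℕ,
      MvPolynomial.map f (phiPoly Fq q (e + 1) * pderiv 0 (phiPoly Fq q e) -
        phiPoly Fq q e * pderiv 0 (phiPoly Fq q (e + 1))) = C c * (X 0 ^ q * X 1) ^ m := by
  intro e
  induction e with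
  | zero =>
    intro _
    refine ⟨-1, neg_ne_zero.mpr one_ne_zero, 0, ?_⟩
    rw [casoratian_zero Fq q, pow_zero, mul_one, map_neg, map_one, map_neg, map_one]
  | succ n ih =>
    intro hlt
    obtain ⟨c, hc0, m, hm⟩ := ih (by omega)
    have hc2 : f (Polynomial.X ^ q ^ (n + 1) - Polynomial.X) ≠ 0 :=
      hfrob (n + 1) (Nat.succ_pos n) hlt
    refine ⟨-(f (Polynomial.X ^ q ^ (n + 1) - Polynomial.X) * c),
      neg_ne_zero.mpr (mul_ne_zero hc2 hc0), q ^ n + m, ?_⟩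
    rw [casoratian_step Fq q p hpq n, map_mul, map_neg, map_mul, MvPolynomial.map_C, hm]
    rw [map_pow, map_mul, map_pow, MvPolynomial.map_X, MvPolynomial.map_X]
    rw [map_neg, map_mul, pow_add]
    ring

end Generic

theorem ufm_of_units (R : Type*) [CommRing R] [IsDomain R]
    (hu : ∀ a : R, a ≠ 0 → IsUnit a) : UniqueFactorizationMonoid R := by
  have acc0 : ∀ a : R, a ≠ 0 → Acc DvdNotUnit a := by
    intro a ha
    refine Acc.intro a fun c hc => absurd hc ?_
    rintro ⟨hc0, y, hy, rfl⟩
    rcases eq_or_ne y 0 with rfl | hy0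
    · exact ha (mul_zero c)
    · exact hy (hu y hy0)
  have hwf : WellFounded (DvdNotUnit (α := R)) := by
    refine WellFounded.intro fun b => ?_
    rcases eq_or_ne b 0 with rfl | hb
    · exact Acc.intro 0 fun a ha => acc0 a ha.1
    · exact acc0 b hb
  refine { toIsWellFounded := ⟨hwf⟩, irreducible_iff_prime := ?_ }
  intro a
  constructor
  · intro hi
    exact absurd (hu a hi.ne_zero) hi.not_isUnit
  · intro hp
    exact absurd (hu a hp.ne_zero) hp.not_unit

theorem charP_Fq (p r q : ℕ) (hp : p.Prime) (hr : 0 < r) (hq : q = p ^ r)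
    (Fq : Type) [Field Fq] [Fintype Fq] (hcard : Fintype.card Fq = q) : CharP Fq p := by
  have hc : CharP Fq (ringChar Fq) := ringChar.charP Fq
  obtain ⟨n, hn, hcard'⟩ := FiniteField.card Fq (ringChar Fq)
  have h : p = ringChar Fq := by
    have hdvd : p ∣ (ringChar Fq) ^ (n : ℕ) := by
      rw [← hcard', hcard, hq]
      exact dvd_pow_self p hr.ne'
    exact (Nat.prime_dvd_prime_iff_eq hp hn).mp (hp.dvd_of_dvd_pow hdvd)
  rwa [h]

theorem frob_ne (p r q : ℕ) (hp : p.Prime) (hr : 0 < r) (hq : q = p ^ r)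
    (Fq : Type) [Field Fq] [Fintype Fq] (hcard : Fintype.card Fq = q)
    (π : Polynomial Fq) (hmonic : π.Monic) (hirr : Irreducible π)
    (j : ℕ) (hj : 0 < j) (hjD : j < π.natDegree) :
    (Ideal.Quotient.mk (Ideal.span {π}) (Polynomial.X ^ q ^ j - Polynomial.X)) ≠ 0 := by
  intro hzero
  classical
  haveI : Fact p.Prime := ⟨hp⟩
  haveI : Fact (Irreducible π) := ⟨hirr⟩
  haveI hmax : (Ideal.span {π}).IsMaximal :=
    PrincipalIdealRing.isMaximal_of_irreducible hirr
  haveI : IsDomain (Polynomial Fq ⧸ Ideal.span {π}) := Ideal.Quotient.isDomain _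
  set Q' := Polynomial Fq ⧸ Ideal.span {π} with hQ'
  set mk : Polynomial Fq →+* Q' := Ideal.Quotient.mk (Ideal.span {π}) with hmk
  haveI : CharP Fq p := charP_Fq p r q hp hr hq Fq hcard
  have hq1 : 1 < q := by
    rw [hq]; exact Nat.one_lt_pow hr.ne' hp.one_lt
  have ht : (mk Polynomial.X) ^ q ^ j = mk Polynomial.X := by
    rw [map_sub] at hzero
    rw [← map_pow]
    exact sub_eq_zero.mp hzero
  haveI : CharP Q' p := charP_of_injective_ringHom (mk.comp Polynomial.C).injective p
  haveI : ExpChar Q' p := ExpChar.prime hp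
  have hall : ∀ f : Polynomial Fq, (mk f) ^ q ^ j = mk f := by
    intro f
    induction f using Polynomial.induction_on with
    | C a =>
      rw [← map_pow, ← map_pow, ← hcard]
      rw [FiniteField.pow_card_pow]
    | add f g hf hg =>
      have hqj : q ^ j = p ^ (r * j) := by rw [hq, pow_mul]
      rw [map_add, hqj, add_pow_char_pow, ← hqj, hf, hg]
    | monomial n a hrec =>
      have h : (Polynomial.C a * Polynomial.X ^ (n + 1)) =
          (Polynomial.C a * Polynomial.X ^ n) * Polynomial.X := by ring
      rw [h, map_mul, mul_pow, hrec, ht]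
  have hroot : ∀ a : Q', a ^ q ^ j = a := by
    intro a
    obtain ⟨f, rfl⟩ := Ideal.Quotient.mk_surjective a
    exact hall f
  set P : Polynomial Q' := Polynomial.X ^ q ^ j - Polynomial.X with hP
  have hqj1 : 1 < q ^ j := Nat.one_lt_pow hj.ne' hq1
  have hdlt : (Polynomial.X : Polynomial Q').degree <
      ((Polynomial.X : Polynomial Q') ^ q ^ j).degree := by
    rw [Polynomial.degree_X_pow, Polynomial.degree_X]
    exact_mod_cast hqj1
  have hPdeg : P.natDegree = q ^ j := by
    rw [hP, Polynomial.natDegree_eq_of_degree_eq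
      (Polynomial.degree_sub_eq_left_of_degree_lt hdlt), Polynomial.natDegree_X_pow]
  have hPne : P ≠ 0 := Polynomial.ne_zero_of_natDegree_gt (n := 1) (by omega)
  set D := π.natDegree with hD
  have hπ0 : π ≠ 0 := hmonic.ne_zero
  set J : (Fin D → Fq) → Q' := fun v =>
    mk ((Polynomial.degreeLTEquiv Fq D).symm v : Polynomial Fq) with hJ
  have hJinj : Set.InjOn J ↑(Finset.univ : Finset (Fin D → Fq)) := by
    intro v _ w _ hvw
    have h1 : π ∣ (((Polynomial.degreeLTEquiv Fq D).symm v : Polynomial Fq) -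
        ((Polynomial.degreeLTEquiv Fq D).symm w : Polynomial Fq)) := by
      rw [← Ideal.mem_span_singleton]
      exact Ideal.Quotient.eq.mp hvw
    have h2 : (((Polynomial.degreeLTEquiv Fq D).symm v : Polynomial Fq) -
        ((Polynomial.degreeLTEquiv Fq D).symm w : Polynomial Fq)).degree < π.degree := by
      rw [Polynomial.degree_eq_natDegree hπ0]
      exact Polynomial.mem_degreeLT.mp
        (sub_mem ((Polynomial.degreeLTEquiv Fq D).symm v).2
          ((Polynomial.degreeLTEquiv Fq D).symm w).2)
    have h3 := Polynomial.eq_zero_of_dvd_of_degree_lt h1 h2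
    have h4 : ((Polynomial.degreeLTEquiv Fq D).symm v : Polynomial Fq) =
        ((Polynomial.degreeLTEquiv Fq D).symm w : Polynomial Fq) := sub_eq_zero.mp h3
    exact (Polynomial.degreeLTEquiv Fq D).symm.injective (Subtype.ext h4)
  have hmaps : ∀ v ∈ (Finset.univ : Finset (Fin D → Fq)), J v ∈ P.roots.toFinset := by
    intro v _
    rw [Multiset.mem_toFinset, Polynomial.mem_roots']
    refine ⟨hPne, ?_⟩
    simp only [hP, Polynomial.IsRoot, Polynomial.eval_sub, Polynomial.eval_pow,
      Polynomial.eval_X]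
    rw [hroot, sub_self]
  have hle : Fintype.card (Fin D → Fq) ≤ P.roots.toFinset.card := by
    have h := Finset.card_le_card_of_injOn J hmaps hJinj
    simpa using h
  have hcardfun : Fintype.card (Fin D → Fq) = q ^ D := by
    rw [Fintype.card_fun, hcard, Fintype.card_fin]
  have hub : P.roots.toFinset.card ≤ q ^ j := by
    calc P.roots.toFinset.card ≤ Multiset.card P.roots := Multiset.toFinset_card_le _
    _ ≤ P.natDegree := Polynomial.card_roots' P
    _ = q ^ j := hPdeg
  have hcontr : q ^ D ≤ q ^ j := by omega
  exact absurd hcontr (not_le.mpr (Nat.pow_lt_pow_right hq1 hjD))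

/-- With `d = deg π` (where `π ∈ A = 𝔽_q[T]` is monic irreducible, `π ≠ T`, `𝔭 = (π)`),
the reduction `φ̄_d` of `φ_d` modulo `𝔭` is square-free in `𝔽_𝔭[U,V]`. -/
theorem phiPoly_mod_squarefree (p r q : ℕ) (hp : p.Prime) (hodd : Odd p) (hr : 0 < r)
    (hq : q = p ^ r) (Fq : Type) [Field Fq] [Fintype Fq] (hcard : Fintype.card Fq = q)
    (π : Polynomial Fq) (hmonic : π.Monic) (hirr : Irreducible π)
    (hne : π ≠ Polynomial.X) :
    Squarefree
      (MvPolynomial.map (Ideal.Quotient.mk (Ideal.span {π})) (phiPoly Fq q π.natDegree)) := by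
  classical
  haveI : Fact p.Prime := ⟨hp⟩
  haveI : Fact (Irreducible π) := ⟨hirr⟩
  haveI hmax : (Ideal.span {π}).IsMaximal := PrincipalIdealRing.isMaximal_of_irreducible hirr
  haveI : IsDomain (Polynomial Fq ⧸ Ideal.span {π}) := Ideal.Quotient.isDomain _
  haveI : CharP Fq p := charP_Fq p r q hp hr hq Fq hcard
  haveI : CharP (Polynomial Fq) p := charP_of_injective_ringHom Polynomial.C_injective p
  set Q' := Polynomial Fq ⧸ Ideal.span {π} with hQ'
  set mk : Polynomial Fq →+* Q' := Ideal.Quotient.mk (Ideal.span {π}) with hmk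
  haveI : UniqueFactorizationMonoid Q' := by
    refine ufm_of_units Q' fun a ha => ?_
    obtain ⟨b, hb⟩ := Ideal.Quotient.exists_inv (I := Ideal.span {π}) ha
    exact IsUnit.of_mul_eq_one b hb
  have hq0 : q ≠ 0 := by rw [hq]; exact pow_ne_zero r hp.ne_zero
  have hpq : p ∣ q := by rw [hq]; exact dvd_pow_self p hr.ne'
  set D := π.natDegree with hD
  have hD0 : 0 < D :=
    Polynomial.natDegree_pos_iff_degree_pos.mpr (Polynomial.degree_pos_of_irreducible hirr)
  have ht0 : mk Polynomial.X ≠ 0 := by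
    intro h
    have hdvd : π ∣ Polynomial.X := by
      rw [← Ideal.mem_span_singleton]
      exact Ideal.Quotient.eq_zero_iff_mem.mp h
    have hassoc : Associated π Polynomial.X :=
      hirr.associated_of_dvd Polynomial.irreducible_X hdvd
    exact hne (Polynomial.eq_of_monic_of_associated hmonic Polynomial.monic_X hassoc)
  have hF1 : eval ![(1 : Q'), 0] (MvPolynomial.map mk (phiPoly Fq q D)) = 1 :=
    eval_map_phiPoly_10 mk hq0 D
  have hE2 : eval ![(0 : Q'), 1] (MvPolynomial.map mk (phiPoly Fq q D)) ≠ 0 :=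
    eval_map_phiPoly_01 mk hq0 ht0 D
  have hW := map_casoratian mk p hpq D
    (fun j hj hjD => frob_ne p r q hp hr hq Fq hcard π hmonic hirr j hj hjD)
  -- main argument
  intro x hx
  by_contra hxu
  have hFne : MvPolynomial.map mk (phiPoly Fq q D) ≠ 0 := by
    intro h
    rw [h] at hF1
    simp at hF1
  have hx0 : x ≠ 0 := by
    rintro rfl
    rw [zero_mul, zero_dvd_iff] at hx
    exact hFne hx
  obtain ⟨g, hgirr, hgdvd⟩ := WfDvdMonoid.exists_irreducible_factor hxu hx0
  have hgp : Prime g := UniqueFactorizationMonoid.irreducible_iff_prime.mp hgirr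
  have hg2 : g * g ∣ MvPolynomial.map mk (phiPoly Fq q D) := (mul_dvd_mul hgdvd hgdvd).trans hx
  obtain ⟨h, hFh⟩ := hg2
  have hgF : g ∣ MvPolynomial.map mk (phiPoly Fq q D) := by
    rw [hFh]
    exact ⟨g * h, by ring⟩
  have hgdF : g ∣ pderiv 0 (MvPolynomial.map mk (phiPoly Fq q D)) := by
    have hder : pderiv (0 : Fin 2) (g * g * h) =
        g * (pderiv 0 g * h + pderiv 0 g * h + g * pderiv 0 h) := by
      rw [pderiv_mul, pderiv_mul]
      ring
    rw [hFh, hder]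
    exact ⟨_, rfl⟩
  obtain ⟨c, hc0, m, hWD⟩ := hW (D - 1) (by omega)
  rw [show D - 1 + 1 = D from by omega] at hWD
  have hgW : g ∣ C c * (X 0 ^ q * X 1 : MvPolynomial (Fin 2) Q') ^ m := by
    rw [← hWD, map_sub, map_mul, map_mul]
    refine dvd_sub (α := MvPolynomial (Fin 2) Q') (hgF.mul_right _) ?_
    have hud : MvPolynomial.map mk (pderiv 0 (phiPoly Fq q D)) =
        pderiv 0 (MvPolynomial.map mk (phiPoly Fq q D)) := pderiv_map.symm
    rw [hud]
    exact hgdF.mul_left _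
  obtain ⟨cinv, hcinv⟩ := Ideal.Quotient.exists_inv (I := Ideal.span {π}) hc0
  have hCcu : IsUnit (C c : MvPolynomial (Fin 2) Q') :=
    IsUnit.of_mul_eq_one (C cinv) (by rw [← map_mul, hcinv, map_one])
  have hgM : g ∣ (X 0 ^ q * X 1 : MvPolynomial (Fin 2) Q') ^ m := by
    rcases hgp.dvd_or_dvd hgW with h1 | h1
    · exact absurd (isUnit_of_dvd_unit h1 hCcu) hgirr.not_isUnit
    · exact h1
  have hgXX : g ∣ (X 0 : MvPolynomial (Fin 2) Q') ∨ g ∣ (X 1 : MvPolynomial (Fin 2) Q') := by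
    rcases hgp.dvd_or_dvd (hgp.dvd_of_dvd_pow hgM) with h1 | h1
    · exact Or.inl (hgp.dvd_of_dvd_pow h1)
    · exact Or.inr h1
  rcases hgXX with h1 | h1
  · have hXF : (X 0 : MvPolynomial (Fin 2) Q') ∣ MvPolynomial.map mk (phiPoly Fq q D) :=
      ((hgirr.associated_of_dvd (primeX0 Q').irreducible h1).symm.dvd).trans hgF
    obtain ⟨k, hk⟩ := hXF
    rw [hk, eval_mul, eval_X] at hE2
    simp only [Matrix.cons_val_zero] at hE2
    rw [zero_mul] at hE2
    exact hE2 rfl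
  · have hXF : (X 1 : MvPolynomial (Fin 2) Q') ∣ MvPolynomial.map mk (phiPoly Fq q D) :=
      ((hgirr.associated_of_dvd (primeX1 Q').irreducible h1).symm.dvd).trans hgF
    obtain ⟨k, hk⟩ := hXF
    rw [hk, eval_mul, eval_X] at hF1
    simp only [Matrix.cons_val_one, Matrix.head_cons, Matrix.cons_val_zero] at hF1
    rw [zero_mul] at hF1
    exact one_ne_zero hF1.symm
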